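/- For every natural number m, β(m) − α(m) = m^{m+1}, where α(m) := Σ_{k=0}^{m} C(m,k) k^k (m−k)^{m−k} and β(m) := Σ_{j=0}^{m} Σ_{k=0}^{m−j} C(m,j) C(m−j,k) j^j k^k (m−j−k)^{m−j−k} (with the convention 0^0 = 1). -/

import Mathlib

open Finset

private lemma key_choose (m a v : ℕ) :
    m.choose (a+v+2) * (a+v+2) * (a+v+1).choose a
      = m.choose (a+1) * (a+1) * (m - a - 1).choose (v+1) := by
  have h1 : (a+v+2) * (a+v+1).choose a = (a+v+2).choose (a+1) * (a+1) :=
    Nat.add_one_mul_choose_eq (a+v+1) a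
  by_cases h : a+v+2 ≤ m
  · have h2 := Nat.choose_mul (n := m) (k := a+v+2) (s := a+1) (by omega)
    have e1 : a+v+2 - (a+1) = v+1 := by omega
    have e2 : m - (a+1) = m - a - 1 := by omega
    rw [e1, e2] at h2
    calc m.choose (a+v+2) * (a+v+2) * (a+v+1).choose a
        = m.choose (a+v+2) * ((a+v+2) * (a+v+1).choose a) := by ring
      _ = m.choose (a+v+2) * ((a+v+2).choose (a+1) * (a+1)) := by rw [h1]
      _ = m.choose (a+v+2) * (a+v+2).choose (a+1) * (a+1) := by ring
      _ = m.choose (a+1) * (m-a-1).choose (v+1) * (a+1) := by rw [h2]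
      _ = _ := by ring
  · have z1 : m.choose (a+v+2) = 0 := Nat.choose_eq_zero_of_lt (by omega)
    have z2 : (m - a - 1).choose (v+1) = 0 := Nat.choose_eq_zero_of_lt (by omega)
    rw [z1, z2]; ring

private lemma choose_swap (m i j : ℕ) :
    m.choose j * (m-j).choose i = m.choose i * (m-i).choose j := by
  by_cases h : i + j ≤ m
  · have h1 := Nat.choose_mul (n := m) (k := i+j) (s := j) (by omega)
    have h2 := Nat.choose_mul (n := m) (k := i+j) (s := i) (by omega)
    have e1 : i + j - j = i := by omega
    have e2 : i + j - i = j := by omega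
    rw [e1] at h1; rw [e2] at h2
    have e3 : (i+j).choose j = (i+j).choose i := by
      exact Nat.choose_symm_of_eq_add (by omega)
    rw [e3] at h1
    omega
  · by_cases hj : j ≤ m
    · by_cases hi : i ≤ m
      · rw [Nat.choose_eq_zero_of_lt (n := m - j) (by omega),
          Nat.choose_eq_zero_of_lt (n := m - i) (by omega)]
        ring
      · rw [Nat.choose_eq_zero_of_lt (n := m - j) (k := i) (by omega),
          Nat.choose_eq_zero_of_lt (n := m) (k := i) (by omega)]
        ring
    · rw [Nat.choose_eq_zero_of_lt (n := m) (k := j) (by omega),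
        Nat.choose_eq_zero_of_lt (n := m - i) (k := j) (by omega)]
      ring

private lemma descFactorial_add (m i a : ℕ) :
    m.descFactorial (i + a) = m.descFactorial i * (m - i).descFactorial a := by
  induction a with
  | zero => simp
  | succ a ih =>
      have : i + (a+1) = (i+a) + 1 := by omega
      rw [this, Nat.descFactorial_succ, ih, Nat.descFactorial_succ]
      have : m - (i+a) = m - i - a := by omega
      rw [this]; ring

private def Fab (m x y : ℕ) : ℕ :=
  (y + m) ^ m +
    ∑ j ∈ range m, m.choose (j+1) * x * (x + (j+1)) ^ j * (y + (m - (j+1))) ^ (m - (j+1))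

private lemma abel (m : ℕ) : ∀ x y : ℕ, Fab m x y = (x + y + m) ^ m := by
  induction m using Nat.strong_induction_on with
  | _ m IH =>
  intro x y
  unfold Fab
  have step1 : ∀ j ∈ range m,
      m.choose (j+1) * x * (x + (j+1)) ^ j * (y + (m - (j+1))) ^ (m - (j+1))
      = ∑ a ∈ range m,
          m.choose (j+1) * (x^(a+1) * (j+1)^(j-a) * j.choose a)
            * (y + (m - (j+1))) ^ (m - (j+1)) := by
    intro j hj
    rw [mem_range] at hj
    calc m.choose (j+1) * x * (x + (j+1)) ^ j * (y + (m - (j+1))) ^ (m - (j+1))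
        = ∑ a ∈ range (j+1),
            m.choose (j+1) * (x^(a+1) * (j+1)^(j-a) * j.choose a)
              * (y + (m - (j+1))) ^ (m - (j+1)) := by
          rw [add_pow, Finset.mul_sum, Finset.sum_mul]
          exact Finset.sum_congr rfl fun a _ => by push_cast; ring
      _ = _ := by
          refine Finset.sum_subset ?_ ?_
          · intro b hb; rw [mem_range] at hb ⊢; omega
          · intro b hb hb2
            rw [mem_range] at hb hb2
            rw [Nat.choose_eq_zero_of_lt (n := j) (k := b) (by omega)]
            ring
  have main : (∑ j ∈ range m,
      m.choose (j+1) * x * (x + (j+1)) ^ j * (y + (m - (j+1))) ^ (m - (j+1)))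
      = ∑ a ∈ range m, x^(a+1) * (m.choose (a+1) * (y+m)^(m - (a+1))) := by
    rw [Finset.sum_congr rfl step1, Finset.sum_comm]
    refine Finset.sum_congr rfl ?_
    intro a ha
    rw [mem_range] at ha
    set s := m - a - 1 with hs
    calc (∑ j ∈ range m,
          m.choose (j+1) * (x^(a+1) * (j+1)^(j-a) * j.choose a)
            * (y + (m - (j+1))) ^ (m - (j+1)))
        = ∑ j ∈ Ico a m,
          m.choose (j+1) * (x^(a+1) * (j+1)^(j-a) * j.choose a)
            * (y + (m - (j+1))) ^ (m - (j+1)) := by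
          refine (Finset.sum_subset ?_ ?_).symm
          · intro j hj; rw [mem_Ico] at hj; rw [mem_range]; omega
          · intro j hj hj2
            rw [mem_range] at hj; rw [mem_Ico] at hj2
            rw [Nat.choose_eq_zero_of_lt (n := j) (k := a) (by omega)]
            ring
      _ = ∑ u ∈ range (m - a),
          m.choose ((a+u)+1) * (x^(a+1) * ((a+u)+1)^((a+u)-a) * (a+u).choose a)
            * (y + (m - ((a+u)+1))) ^ (m - ((a+u)+1)) :=
          Finset.sum_Ico_eq_sum_range _ a m
      _ = ∑ u ∈ range (s + 1),
          m.choose ((a+u)+1) * (x^(a+1) * ((a+u)+1)^((a+u)-a) * (a+u).choose a)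
            * (y + (m - ((a+u)+1))) ^ (m - ((a+u)+1)) := by
          rw [show m - a = s + 1 by omega]
      _ = (∑ v ∈ range s,
          m.choose ((a+(v+1))+1) * (x^(a+1) * ((a+(v+1))+1)^((a+(v+1))-a) * (a+(v+1)).choose a)
            * (y + (m - ((a+(v+1))+1))) ^ (m - ((a+(v+1))+1)))
          + m.choose ((a+0)+1) * (x^(a+1) * ((a+0)+1)^((a+0)-a) * (a+0).choose a)
            * (y + (m - ((a+0)+1))) ^ (m - ((a+0)+1)) :=
          Finset.sum_range_succ' _ s
      _ = m.choose ((a+0)+1) * (x^(a+1) * ((a+0)+1)^((a+0)-a) * (a+0).choose a)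
            * (y + (m - ((a+0)+1))) ^ (m - ((a+0)+1))
          + ∑ v ∈ range s,
          m.choose ((a+(v+1))+1) * (x^(a+1) * ((a+(v+1))+1)^((a+(v+1))-a) * (a+(v+1)).choose a)
            * (y + (m - ((a+(v+1))+1))) ^ (m - ((a+(v+1))+1)) := Nat.add_comm _ _
      _ = x^(a+1) * (m.choose (a+1) * Fab s (a+1) y) := by
          unfold Fab
          rw [mul_add, mul_add, Finset.mul_sum, Finset.mul_sum]
          congr 1
          · simp only [Nat.add_zero, Nat.sub_self, pow_zero, Nat.choose_self, mul_one]
            rw [show m - (a+1) = s by omega]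
            ring
          · refine Finset.sum_congr rfl ?_
            intro v hv
            have e3 : m - (a+(v+1)+1) = s - (v+1) := by omega
            rw [e3]
            calc m.choose (a+(v+1)+1) * (x^(a+1) * (a+(v+1)+1)^(a+(v+1)-a) * (a+(v+1)).choose a)
                  * (y + (s - (v+1))) ^ (s - (v+1))
                = (m.choose (a+v+2) * (a+v+2) * (a+v+1).choose a)
                    * (x^(a+1) * (a+v+2)^v * (y + (s - (v+1))) ^ (s - (v+1))) := by
                  rw [show a+(v+1)+1 = a+v+2 by omega, show a+(v+1)-a = v+1 by omega,
                    show a+(v+1) = a+v+1 by omega, pow_succ]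
                  ring
              _ = (m.choose (a+1) * (a+1) * s.choose (v+1))
                    * (x^(a+1) * (a+v+2)^v * (y + (s - (v+1))) ^ (s - (v+1))) := by
                  rw [key_choose m a v, ← hs]
              _ = _ := by
                  rw [show a+1+(v+1) = a+v+2 by omega]
                  ring
      _ = x^(a+1) * (m.choose (a+1) * ((a+1) + y + s)^s) := by rw [IH s (by omega)]
      _ = x^(a+1) * (m.choose (a+1) * (y+m)^(m-(a+1))) := by
          rw [show (a+1)+y+s = y+m by omega, show s = m - (a+1) by omega]
  rw [main]
  conv_rhs => rw [show x + y + m = x + (y+m) by omega, add_pow, Finset.sum_range_succ']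
  simp only [pow_zero, Nat.sub_zero, Nat.choose_zero_right, Nat.cast_id, one_mul, mul_one]
  have : (∑ a ∈ range m, x^(a+1) * (m.choose (a+1) * (y+m)^(m - (a+1))))
      = ∑ k ∈ range m, x^(k+1) * (y+m)^(m-(k+1)) * (m.choose (k+1)) :=
    Finset.sum_congr rfl fun a _ => by push_cast; ring
  rw [this]
  ring

private def Sab (m x y : ℕ) : ℕ :=
  ∑ j ∈ range (m+1), m.choose j * (x+j)^j * (y+(m-j))^(m-j)

private def Rab (m c : ℕ) : ℕ :=
  ∑ i ∈ range (m+1), m.descFactorial i * (c+m)^(m-i)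

private lemma S_eq_R (m : ℕ) : ∀ x y : ℕ, Sab m x y = Rab m (x + y) := by
  induction m with
  | zero => intro x y; simp [Sab, Rab]
  | succ m ih =>
    intro x y
    have hS : Sab (m+1) x y = Fab (m+1) x y + (m+1) * Sab m (x+1) y := by
      unfold Sab Fab
      rw [Finset.sum_range_succ']
      simp only [Nat.succ_sub_succ_eq_sub, Nat.choose_zero_right, one_mul, pow_zero,
        Nat.sub_zero]
      rw [Finset.mul_sum]
      have split : ∀ j ∈ range (m+1),
          (m+1).choose (j+1) * (x+(j+1))^(j+1) * (y+(m-j))^(m-j)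
          = (m+1).choose (j+1) * x * (x+(j+1))^j * (y+(m-j))^(m-j)
            + (m+1) * (m.choose j * ((x+1)+j)^j * (y+(m-j))^(m-j)) := by
        intro j hj
        have h : (m+1).choose (j+1) * (j+1) = (m+1) * m.choose j :=
          (Nat.add_one_mul_choose_eq m j).symm
        calc (m+1).choose (j+1) * (x+(j+1))^(j+1) * (y+(m-j))^(m-j)
            = (m+1).choose (j+1) * x * (x+(j+1))^j * (y+(m-j))^(m-j)
              + ((m+1).choose (j+1) * (j+1)) * ((x+(j+1))^j * (y+(m-j))^(m-j)) := by
              rw [pow_succ]; ring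
          _ = _ := by rw [h, show x+(j+1) = (x+1)+j by omega]; ring
      rw [Finset.sum_congr rfl split, Finset.sum_add_distrib]
      ring
    have hR : Rab (m+1) (x+y) = ((x+y)+(m+1))^(m+1) + (m+1) * Rab m ((x+y)+1) := by
      unfold Rab
      rw [Finset.sum_range_succ']
      simp only [Nat.succ_sub_succ_eq_sub, Nat.descFactorial_zero, one_mul, pow_zero,
        Nat.sub_zero, Nat.succ_descFactorial_succ]
      rw [Finset.mul_sum]
      rw [Finset.sum_congr rfl (g := fun i =>
          (m+1) * (m.descFactorial i * (((x+y)+1)+m)^(m-i))) (fun i _ => by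
        rw [show (x+y)+(m+1) = ((x+y)+1)+m by omega]; ring)]
      ring
    rw [hS, abel (m+1) x y, ih (x+1) y, hR, show (x+1)+y = (x+y)+1 by omega,
      show x+y+(m+1) = (x+y)+(m+1) by omega]

private lemma tri (n : ℕ) (g : ℕ → ℕ) :
    ∑ i ∈ range (n+1), ∑ a ∈ range (n-i+1), g (i+a)
      = ∑ t ∈ range (n+1), (t+1) * g t := by
  have h1 : ∀ i ∈ range (n+1),
      (∑ a ∈ range (n-i+1), g (i+a)) = ∑ t ∈ range (n+1), if i ≤ t then g t else 0 := by
    intro i hi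
    rw [mem_range] at hi
    calc (∑ a ∈ range (n-i+1), g (i+a))
        = ∑ t ∈ Ico i (n+1), g t := by
          rw [Finset.sum_Ico_eq_sum_range, show n+1-i = n-i+1 by omega]
      _ = ∑ t ∈ (range (n+1)).filter (fun t => i ≤ t), g t := by
          congr 1
          ext t
          simp only [mem_Ico, mem_filter, mem_range]
          omega
      _ = _ := (Finset.sum_filter _ _)
  rw [Finset.sum_congr rfl h1, Finset.sum_comm]
  refine Finset.sum_congr rfl ?_
  intro t ht
  rw [mem_range] at ht
  calc (∑ i ∈ range (n+1), if i ≤ t then g t else 0)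
      = ∑ i ∈ (range (n+1)).filter (fun i => i ≤ t), g t := (Finset.sum_filter _ _).symm
    _ = ∑ i ∈ range (t+1), g t := by
        congr 1
        ext i
        simp only [mem_filter, mem_range]
        omega
    _ = (t+1) * g t := by rw [Finset.sum_const, card_range, smul_eq_mul]

private lemma tel (m : ℕ) : ∀ k, k ≤ m+1 →
    (∑ t ∈ range k, t * (m.descFactorial t * m^(m-t))) + m.descFactorial k * m^(m+1-k)
      = m^(m+1) := by
  intro k
  induction k with
  | zero => simp
  | succ k ih =>
    intro hk
    rw [Finset.sum_range_succ]
    have step : k * (m.descFactorial k * m^(m-k)) + m.descFactorial (k+1) * m^(m+1-(k+1))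
        = m.descFactorial k * m^(m+1-k) := by
      rw [Nat.descFactorial_succ, show m+1-(k+1) = m-k by omega,
        show m+1-k = (m-k)+1 by omega, pow_succ]
      calc k * (m.descFactorial k * m^(m-k)) + (m-k) * m.descFactorial k * m^(m-k)
          = (k + (m-k)) * (m.descFactorial k * m^(m-k)) := by ring
        _ = _ := by rw [show k + (m-k) = m by omega]; ring
    rw [Nat.add_assoc, step]
    exact ih (by omega)

/-- For every natural number `m`, `β(m) - α(m) = m^{m+1}`. -/
theorem beta_sub_alpha (m : ℕ) :
    (∑ j ∈ Finset.range (m + 1), ∑ k ∈ Finset.range (m - j + 1),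
      m.choose j * (m - j).choose k * j ^ j * k ^ k * (m - j - k) ^ (m - j - k)) -
    (∑ k ∈ Finset.range (m + 1), m.choose k * k ^ k * (m - k) ^ (m - k)) =
    m ^ (m + 1) := by
  have halpha : (∑ k ∈ range (m+1), m.choose k * k^k * (m-k)^(m-k))
      = ∑ t ∈ range (m+1), m.descFactorial t * m^(m-t) := by
    have h0 : (∑ k ∈ range (m+1), m.choose k * k^k * (m-k)^(m-k)) = Sab m 0 0 := by
      unfold Sab
      exact Finset.sum_congr rfl fun k _ => by simp only [Nat.zero_add]
    rw [h0, S_eq_R m 0 0]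
    unfold Rab
    exact Finset.sum_congr rfl fun i _ => by simp only [Nat.zero_add]
  have hbeta : (∑ j ∈ range (m + 1), ∑ k ∈ range (m - j + 1),
        m.choose j * (m - j).choose k * j ^ j * k ^ k * (m - j - k) ^ (m - j - k))
      = ∑ t ∈ range (m+1), (t+1) * (m.descFactorial t * m^(m-t)) := by
    have b1 : ∀ j ∈ range (m+1),
        (∑ k ∈ range (m-j+1), m.choose j * (m-j).choose k * j^j * k^k * (m-j-k)^(m-j-k))
        = m.choose j * j^j * Sab (m-j) 0 0 := by
      intro j hj
      unfold Sab
      rw [Finset.mul_sum]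
      exact Finset.sum_congr rfl fun k _ => by simp only [Nat.zero_add]; ring
    have b2 : ∀ j ∈ range (m+1),
        m.choose j * j^j * Sab (m-j) 0 0
        = ∑ i ∈ range (m+1),
            m.choose j * j^j * ((m-j).descFactorial i * (m-j)^(m-j-i)) := by
      intro j hj
      rw [mem_range] at hj
      have hSR : Sab (m-j) 0 0 = Rab (m-j) 0 := by simpa using S_eq_R (m-j) 0 0
      calc m.choose j * j^j * Sab (m-j) 0 0
          = ∑ i ∈ range (m-j+1),
              m.choose j * j^j * ((m-j).descFactorial i * (m-j)^(m-j-i)) := by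
            rw [hSR]
            unfold Rab
            rw [Finset.mul_sum]
            exact Finset.sum_congr rfl fun i _ => by simp only [Nat.zero_add]
        _ = _ := by
            refine Finset.sum_subset (fun i hi => ?_) (fun i hi hi2 => ?_)
            · rw [mem_range] at hi ⊢; omega
            · rw [mem_range] at hi hi2
              rw [Nat.descFactorial_eq_zero_iff_lt.2 (show m-j < i by omega)]
              ring
    have cd : ∀ i j : ℕ, m.choose j * (m-j).descFactorial i
        = m.descFactorial i * (m-i).choose j := by
      intro i j
      rw [Nat.descFactorial_eq_factorial_mul_choose, Nat.descFactorial_eq_factorial_mul_choose]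
      calc m.choose j * (i.factorial * (m-j).choose i)
          = i.factorial * (m.choose j * (m-j).choose i) := by ring
        _ = i.factorial * (m.choose i * (m-i).choose j) := by rw [choose_swap]
        _ = _ := by ring
    have b4 : ∀ i ∈ range (m+1),
        (∑ j ∈ range (m+1), m.choose j * j^j * ((m-j).descFactorial i * (m-j)^(m-j-i)))
        = m.descFactorial i * Rab (m-i) i := by
      intro i hi
      rw [mem_range] at hi
      have term : ∀ j ∈ range (m+1),
          m.choose j * j^j * ((m-j).descFactorial i * (m-j)^(m-j-i))
          = m.descFactorial i * ((m-i).choose j * (0+j)^j * (i+((m-i)-j))^((m-i)-j)) := by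
        intro j hj
        rw [mem_range] at hj
        by_cases hji : j ≤ m - i
        · rw [show i + ((m-i)-j) = m-j by omega, show (m-i)-j = m-j-i by omega]
          calc m.choose j * j^j * ((m-j).descFactorial i * (m-j)^(m-j-i))
              = (m.choose j * (m-j).descFactorial i) * (j^j * (m-j)^(m-j-i)) := by ring
            _ = (m.descFactorial i * (m-i).choose j) * (j^j * (m-j)^(m-j-i)) := by rw [cd]
            _ = _ := by simp only [Nat.zero_add]; ring
        · rw [Nat.descFactorial_eq_zero_iff_lt.2 (show m-j < i by omega),
            Nat.choose_eq_zero_of_lt (n := m-i) (k := j) (by omega)]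
          ring
      rw [Finset.sum_congr rfl term]
      have hSR : Sab (m-i) 0 i = Rab (m-i) (0+i) := S_eq_R (m-i) 0 i
      rw [show (0:ℕ)+i = i by omega] at hSR
      rw [← hSR]
      unfold Sab
      rw [Finset.mul_sum]
      refine (Finset.sum_subset (fun j hj => ?_) (fun j hj hj2 => ?_)).symm
      · rw [mem_range] at hj ⊢; omega
      · rw [mem_range] at hj hj2
        rw [Nat.choose_eq_zero_of_lt (n := m-i) (k := j) (by omega)]
        ring
    have b5 : ∀ i ∈ range (m+1),
        m.descFactorial i * Rab (m-i) i
        = ∑ a ∈ range (m-i+1), m.descFactorial (i+a) * m^(m-(i+a)) := by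
      intro i hi
      rw [mem_range] at hi
      unfold Rab
      rw [Finset.mul_sum]
      refine Finset.sum_congr rfl fun a ha => ?_
      rw [mem_range] at ha
      rw [show i+(m-i) = m by omega, show (m-i)-a = m-(i+a) by omega, descFactorial_add]
      ring
    calc (∑ j ∈ range (m + 1), ∑ k ∈ range (m - j + 1),
          m.choose j * (m - j).choose k * j ^ j * k ^ k * (m - j - k) ^ (m - j - k))
        = ∑ j ∈ range (m+1), ∑ i ∈ range (m+1),
            m.choose j * j^j * ((m-j).descFactorial i * (m-j)^(m-j-i)) := by
          refine Finset.sum_congr rfl fun j hj => ?_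
          rw [b1 j hj, b2 j hj]
      _ = ∑ i ∈ range (m+1), ∑ j ∈ range (m+1),
            m.choose j * j^j * ((m-j).descFactorial i * (m-j)^(m-j-i)) :=
          Finset.sum_comm
      _ = ∑ i ∈ range (m+1), ∑ a ∈ range (m-i+1),
            m.descFactorial (i+a) * m^(m-(i+a)) := by
          refine Finset.sum_congr rfl fun i hi => ?_
          rw [b4 i hi, b5 i hi]
      _ = _ := tri m (fun t => m.descFactorial t * m^(m-t))
  have hsum : (∑ t ∈ range (m+1), t * (m.descFactorial t * m^(m-t))) = m^(m+1) := by
    have h := tel m (m+1) le_rfl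
    rw [Nat.descFactorial_eq_zero_iff_lt.2 (by omega)] at h
    simpa using h
  rw [hbeta, halpha]
  have expand : (∑ t ∈ range (m+1), (t+1) * (m.descFactorial t * m^(m-t)))
      = (∑ t ∈ range (m+1), t * (m.descFactorial t * m^(m-t)))
        + ∑ t ∈ range (m+1), m.descFactorial t * m^(m-t) := by
    rw [← Finset.sum_add_distrib]
    exact Finset.sum_congr rfl fun t _ => by ring
  rw [expand, hsum]
  omega
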